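/- Every countably infinite MB-homogeneous graph that is neither complete nor null contains both an infinite complete subgraph and an infinite independent set as induced subgraphs. -/

import Mathlib

/-- MB-homogeneity: every monomorphism between finite induced subgraphs of `Γ`
extends to a bijective endomorphism of `Γ`. -/
def MBHomogeneous {V : Type*} (Γ : SimpleGraph V) : Prop :=
  ∀ (A : Finset V) (f : V → V), Set.InjOn f A →
    (∀ u ∈ A, ∀ v ∈ A, Γ.Adj u v → Γ.Adj (f u) (f v)) →
    ∃ g : V ≃ V, (∀ u v, Γ.Adj u v → Γ.Adj (g u) (g v)) ∧ ∀ a ∈ A, g a = f a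

namespace Stmt10Aux

variable {V : Type*}

/-- The complement of an MB-homogeneous graph is MB-homogeneous. -/
lemma compl_mb [Nonempty V] {Γ : SimpleGraph V} (hmb : MBHomogeneous Γ) :
    MBHomogeneous Γᶜ := by
  classical
  intro A f hinj hadj
  set f' : V → V := Function.invFunOn f ↑A with hf'
  have hleft : ∀ a ∈ A, f' (f a) = a := fun a ha => hinj.leftInvOn_invFunOn ha
  have hinj' : Set.InjOn f' ↑(A.image f) := by
    intro x hx y hy hxy
    simp only [Finset.coe_image, Set.mem_image] at hx hy
    obtain ⟨a, ha, rfl⟩ := hx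
    obtain ⟨b, hb, rfl⟩ := hy
    rw [hleft a ha, hleft b hb] at hxy
    rw [hxy]
  have hadj' : ∀ u ∈ A.image f, ∀ v ∈ A.image f, Γ.Adj u v → Γ.Adj (f' u) (f' v) := by
    intro x hx y hy hxyadj
    simp only [Finset.mem_image] at hx hy
    obtain ⟨a, ha, rfl⟩ := hx
    obtain ⟨b, hb, rfl⟩ := hy
    rw [hleft a ha, hleft b hb]
    by_contra h
    have hab : a ≠ b := by
      rintro rfl
      exact Γ.loopless.irrefl _ hxyadj
    have : (Γᶜ).Adj a b := by rw [SimpleGraph.compl_adj]; exact ⟨hab, h⟩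
    have := hadj a ha b hb this
    rw [SimpleGraph.compl_adj] at this
    exact this.2 hxyadj
  obtain ⟨g, hg, hga⟩ := hmb (A.image f) f' hinj' hadj'
  refine ⟨g.symm, ?_, ?_⟩
  · intro u v huv
    rw [SimpleGraph.compl_adj] at huv ⊢
    refine ⟨fun h => huv.1 (by simpa using congrArg g h), fun h => huv.2 ?_⟩
    have := hg _ _ h
    simpa using this
  · intro a ha
    have h1 : g (f a) = a := by
      rw [hga (f a) (Finset.mem_image_of_mem f ha), hleft a ha]
    have := congrArg g.symm h1
    simpa using this.symm

/-- Core lemma: swap one element of a finite independent set out to `w`,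
pulling back a new vertex. -/
lemma core {Γ : SimpleGraph V} (hmb : MBHomogeneous Γ) (I : Finset V)
    (hind : ∀ u ∈ I, ∀ v ∈ I, ¬Γ.Adj u v) {t w : V} (ht : t ∈ I) (hw : w ∉ I) :
    ∃ z, z ∉ I ∧ (∀ v ∈ I, v ≠ t → ¬Γ.Adj z v) ∧ (¬Γ.Adj t w → ¬Γ.Adj z t) := by
  classical
  have hinj' : Set.InjOn (fun x => if x = t then w else x) ↑I := by
    intro x hx y hy hxy
    simp only [Finset.mem_coe] at hx hy
    by_cases h1 : x = t <;> by_cases h2 : y = t <;> simp [h1, h2] at hxy ⊢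
    · exact absurd (hxy ▸ hy) hw
    · exact absurd (hxy ▸ hx) hw
    · exact hxy
  have hadj' : ∀ u ∈ I, ∀ v ∈ I, Γ.Adj u v →
      Γ.Adj (if u = t then w else u) (if v = t then w else v) := by
    intro u hu v hv hadjuv
    exact absurd hadjuv (hind u hu v hv)
  obtain ⟨g, hg, hga⟩ := hmb I (fun x => if x = t then w else x) hinj' hadj'
  refine ⟨g.symm t, ?_, ?_, ?_⟩
  · intro hz
    have h2 := hga _ hz
    rw [g.apply_symm_apply] at h2
    by_cases h : g.symm t = t
    · rw [if_pos h] at h2; exact hw (h2 ▸ ht)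
    · rw [if_neg h] at h2; exact h h2.symm
  · intro v hv hvt hadjv
    have := hg _ _ hadjv
    rw [g.apply_symm_apply, hga v hv] at this
    simp only [if_neg hvt] at this
    exact hind t ht v hv this
  · intro hnadj hadjv
    have := hg _ _ hadjv
    rw [g.apply_symm_apply, hga t ht] at this
    simp only [if_pos rfl] at this
    exact hnadj this

/-- Extension lemma: every finite independent set with at least two elements
extends by a common non-neighbor. -/
lemma extend [Infinite V] {Γ : SimpleGraph V} (hmb : MBHomogeneous Γ)
    (I : Finset V) (hind : ∀ u ∈ I, ∀ v ∈ I, ¬Γ.Adj u v)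
    {s t : V} (hs : s ∈ I) (ht : t ∈ I) (hst : s ≠ t) :
    ∃ z, z ∉ I ∧ ∀ v ∈ I, ¬Γ.Adj z v := by
  obtain ⟨w₀, hw₀⟩ := I.exists_notMem
  obtain ⟨z₁, hz₁, h1, -⟩ := core hmb I hind ht hw₀
  have hsz₁ : ¬Γ.Adj s z₁ := fun h => h1 s hs hst h.symm
  obtain ⟨z, hz, h2, h3⟩ := core hmb I hind hs hz₁
  refine ⟨z, hz, fun v hv => ?_⟩
  by_cases hvs : v = s
  · subst hvs; exact h3 hsz₁
  · exact h2 v hv hvs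

lemma infinite_indep [Infinite V] {Γ : SimpleGraph V} (hmb : MBHomogeneous Γ)
    {a b : V} (hab : a ≠ b) (hnadj : ¬Γ.Adj a b) :
    ∃ S : Set V, S.Infinite ∧ ∀ u ∈ S, ∀ v ∈ S, ¬Γ.Adj u v := by
  classical
  -- Good sets: independent finite sets containing a and b
  let Good : Finset V → Prop := fun I =>
    a ∈ I ∧ b ∈ I ∧ ∀ u ∈ I, ∀ v ∈ I, ¬Γ.Adj u v
  have hstep : ∀ I : Finset V, Good I → ∃ z, z ∉ I ∧ Good (insert z I) := by
    intro I hI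
    obtain ⟨ha, hb, hind⟩ := hI
    obtain ⟨z, hz, hzall⟩ := extend hmb I hind ha hb hab
    refine ⟨z, hz, Finset.mem_insert_of_mem ha, Finset.mem_insert_of_mem hb, ?_⟩
    intro u hu v hv
    rcases Finset.mem_insert.1 hu with rfl | hu' <;>
      rcases Finset.mem_insert.1 hv with rfl | hv'
    · exact fun h => Γ.loopless.irrefl _ h
    · exact hzall v hv'
    · exact fun h => hzall u hu' h.symm
    · exact hind u hu' v hv'
  have h0 : Good {a, b} := by
    refine ⟨Finset.mem_insert_self _ _, by simp, ?_⟩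
    intro u hu v hv
    simp only [Finset.mem_insert, Finset.mem_singleton] at hu hv
    rcases hu with rfl | rfl <;> rcases hv with rfl | rfl
    · exact fun h => Γ.loopless.irrefl _ h
    · exact hnadj
    · exact fun h => hnadj h.symm
    · exact fun h => Γ.loopless.irrefl _ h
  -- build the chain
  let F : ℕ → {I : Finset V // Good I} := fun n =>
    Nat.rec ⟨{a, b}, h0⟩
      (fun _ p => ⟨insert (hstep p.1 p.2).choose p.1,
        (hstep p.1 p.2).choose_spec.2⟩) n
  have hFsucc : ∀ n, (F n).1 ⊆ (F (n+1)).1 := by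
    intro n
    exact Finset.subset_insert _ _
  have hFcard : ∀ n, n ≤ (F n).1.card := by
    intro n
    induction n with
    | zero => simp
    | succ n ih =>
      have hnot := (hstep (F n).1 (F n).2).choose_spec.1
      have : (F (n+1)).1.card = (F n).1.card + 1 :=
        Finset.card_insert_of_notMem hnot
      omega
  have hFmono : ∀ m n, m ≤ n → (F m).1 ⊆ (F n).1 := by
    intro m n hmn
    induction n with
    | zero => have : m = 0 := Nat.le_zero.mp hmn; subst this; exact subset_rfl
    | succ n ih =>
      rcases Nat.lt_or_ge m (n+1) with h | h
      · exact (ih (Nat.lt_succ_iff.mp h)).trans (hFsucc n)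
      · have : m = n + 1 := le_antisymm hmn h
        subst this; exact subset_rfl
  refine ⟨⋃ n, ((F n).1 : Set V), ?_, ?_⟩
  · intro hfin
    obtain ⟨T, hT⟩ : ∃ T : Finset V, (⋃ n, ((F n).1 : Set V)) = ↑T :=
      ⟨hfin.toFinset, by simp⟩
    have hsub : ∀ n, (F n).1 ⊆ T := by
      intro n x hx
      have : (x : V) ∈ (⋃ n, ((F n).1 : Set V)) :=
        Set.mem_iUnion.2 ⟨n, hx⟩
      rw [hT] at this
      exact_mod_cast this
    have := Finset.card_le_card (hsub (T.card + 1))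
    have := hFcard (T.card + 1)
    omega
  · intro u hu v hv
    obtain ⟨m, hm⟩ := Set.mem_iUnion.1 hu
    obtain ⟨n, hn⟩ := Set.mem_iUnion.1 hv
    have hum : u ∈ (F (max m n)).1 := hFmono m _ (le_max_left _ _) hm
    have hvn : v ∈ (F (max m n)).1 := hFmono n _ (le_max_right _ _) hn
    exact (F (max m n)).2.2.2 u hum v hvn

end Stmt10Aux

/-- A countably infinite MB-homogeneous graph that is neither complete nor null
contains an infinite clique and an infinite independent set as induced subgraphs. -/
theorem stmt_10 {V : Type*} [Countable V] [Infinite V] (Γ : SimpleGraph V)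
    (hmb : MBHomogeneous Γ)
    (hnotcomplete : ∃ u v : V, u ≠ v ∧ ¬Γ.Adj u v)
    (hnotnull : ∃ u v : V, Γ.Adj u v) :
    (∃ S : Set V, S.Infinite ∧ ∀ u ∈ S, ∀ v ∈ S, u ≠ v → Γ.Adj u v) ∧
    (∃ S : Set V, S.Infinite ∧ ∀ u ∈ S, ∀ v ∈ S, ¬Γ.Adj u v) := by
  constructor
  · -- infinite clique: independent set in the complement
    obtain ⟨u, v, huv⟩ := hnotnull
    have hcmb : MBHomogeneous Γᶜ := Stmt10Aux.compl_mb hmb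
    have hne : u ≠ v := huv.ne
    have hnc : ¬(Γᶜ).Adj u v := by
      rw [SimpleGraph.compl_adj]
      exact fun h => h.2 huv
    obtain ⟨S, hSinf, hSind⟩ := Stmt10Aux.infinite_indep hcmb hne hnc
    refine ⟨S, hSinf, fun x hx y hy hxy => ?_⟩
    have := hSind x hx y hy
    rw [SimpleGraph.compl_adj] at this
    by_contra h
    exact this ⟨hxy, h⟩
  · obtain ⟨x, y, hxy, hnadj⟩ := hnotcomplete
    exact Stmt10Aux.infinite_indep hmb hxy hnadj
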